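/- Reversing a covered edge of a DAG yields a DAG. That is, if G is a DAG with edge a → b such that the parents of b in G equal the parents of a together with a itself (the edge is 'covered'), then the graph obtained by replacing a → b with b → a is acyclic. -/

import Mathlib

/-- Reversing a covered edge of a DAG yields a DAG. If `E a b` and the parents of `b`
are exactly the parents of `a` together with `a`, then the graph obtained by replacing
the edge a → b with b → a is acyclic. -/
theorem covered_edge_reversal_acyclic {V : Type*} (E : V → V → Prop) (a b : V)
    (hacyc : ∀ v : V, ¬ Relation.TransGen E v v)
    (hab : E a b)
    (hcov : {u | E u b} = {u | E u a} ∪ {a}) :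
    ∀ v : V, ¬ Relation.TransGen
      (fun u w => (E u w ∧ ¬ (u = a ∧ w = b)) ∨ (u = b ∧ w = a)) v v := by
  set F : V → V → Prop := fun u w => E u w ∧ ¬ (u = a ∧ w = b) with hF
  have hcov' : ∀ c, E c b ↔ c = a ∨ E c a := by
    intro c
    have := Set.ext_iff.mp hcov c
    simpa using this
  have hFE : ∀ {x y}, F x y → E x y := fun h => h.1
  have hFtr : ∀ {x y}, Relation.ReflTransGen F x y → Relation.ReflTransGen E x y :=
    fun h => Relation.ReflTransGen.mono (r := F) (fun _ _ => hFE) _ _ h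
  -- Lemma 1: no F-path from a to b
  have key : ¬ Relation.ReflTransGen F a b := by
    intro h
    rcases h.cases_tail with heq | ⟨c, hac, hcb⟩
    · exact hacyc a (Relation.TransGen.single (heq ▸ hab))
    · have hcne : c ≠ a := fun hc => hcb.2 ⟨hc, rfl⟩
      have hca : E c a := (hcov' c).mp hcb.1 |>.resolve_left hcne
      exact hacyc a (Relation.TransGen.tail' (hFtr hac) hca)
  intro v hv
  -- decompose any cycle
  have main : ∀ {x y : V}, Relation.TransGen
      (fun u w => F u w ∨ (u = b ∧ w = a)) x y →
      Relation.TransGen F x y ∨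
        (Relation.ReflTransGen F x b ∧ Relation.ReflTransGen F a y) := by
    intro x y h
    induction h with
    | single h =>
      rcases h with h | ⟨rfl, rfl⟩
      · exact Or.inl (Relation.TransGen.single h)
      · exact Or.inr ⟨Relation.ReflTransGen.refl, Relation.ReflTransGen.refl⟩
    | tail hxc hcy ih =>
      rcases hcy with hcy | ⟨rfl, rfl⟩
      · rcases ih with h1 | ⟨h1, h2⟩
        · exact Or.inl (h1.tail hcy)
        · exact Or.inr ⟨h1, h2.tail hcy⟩
      · rcases ih with h1 | ⟨h1, h2⟩
        · exact Or.inr ⟨h1.to_reflTransGen, Relation.ReflTransGen.refl⟩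
        · exact absurd h2 key
  rcases main hv with h | ⟨h1, h2⟩
  · exact hacyc v (Relation.TransGen.mono (r := F) (fun _ _ => hFE) _ _ h)
  · exact key (h2.trans h1)
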